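/- arXiv:1210.1629 — 3 statements merged into one kernel-verified Lean document; each statement's English description precedes it below -/
import Mathlib

section
/- For every n ≥ 1, the kernel of θ_n : S̃_n → S_n is exactly {1, z}, the element z is central of order 2 in S̃_n (in particular z ≠ 1), and consequently the spin group S̃_n has order 2·n!. -/
/-- Defining relations of the spin group `S̃ₙ`: generators are `none` (the central
element `z`) and `some i` (the generator `tᵢ₊₁`, for `i : Fin (n-1)`, i.e. the 1-based
generators `t₁, …, t_{n-1}`).  Relations: `z² = 1`, `tᵢ² = z`, `(tᵢ tᵢ₊₁)³ = z`,
`tᵢ tⱼ = z tⱼ tᵢ` for `|i - j| > 1`, and `z tᵢ = tᵢ z`. -/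
def spinRels (n : ℕ) : Set (FreeGroup (Option (Fin (n - 1)))) :=
  {r | r = FreeGroup.of none ^ 2} ∪
  {r | ∃ i : Fin (n - 1), r = FreeGroup.of (some i) ^ 2 * (FreeGroup.of none)⁻¹} ∪
  {r | ∃ i j : Fin (n - 1), (j : ℕ) = (i : ℕ) + 1 ∧
      r = (FreeGroup.of (some i) * FreeGroup.of (some j)) ^ 3 * (FreeGroup.of none)⁻¹} ∪
  {r | ∃ i j : Fin (n - 1), 1 < |((i : ℕ) : ℤ) - ((j : ℕ) : ℤ)| ∧
      r = FreeGroup.of (some i) * FreeGroup.of (some j) *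
        (FreeGroup.of none * FreeGroup.of (some j) * FreeGroup.of (some i))⁻¹} ∪
  {r | ∃ i : Fin (n - 1), r = FreeGroup.of none * FreeGroup.of (some i) *
      (FreeGroup.of (some i) * FreeGroup.of none)⁻¹}

/-- The spin group `S̃ₙ`, presented by the generators and relations above. -/
abbrev SpinGroup (n : ℕ) : Type := PresentedGroup (spinRels n)

/-- The central element `z` of `S̃ₙ`. -/
def spinZ (n : ℕ) : SpinGroup n := PresentedGroup.of none

/-- The generator `tᵢ₊₁` of `S̃ₙ` (1-based: `t₁, …, t_{n-1}`), for `i : Fin (n-1)`. -/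
def spinT (n : ℕ) (i : Fin (n - 1)) : SpinGroup n := PresentedGroup.of (some i)

/-- The element `i` of `{1, …, n}` (0-based), i.e. the first point moved by the
transposition `(i, i+1)` corresponding to the generator `tᵢ`. -/
def finL {n : ℕ} (i : Fin (n - 1)) : Fin n := ⟨i.val, by have := i.isLt; omega⟩

/-- The element `i+1` of `{1, …, n}` (0-based). -/
def finR {n : ℕ} (i : Fin (n - 1)) : Fin n := ⟨i.val + 1, by have := i.isLt; omega⟩
namespace SpinProof

open Subgroup

variable {n : ℕ}

lemma mk_rel {r : FreeGroup (Option (Fin (n - 1)))} (hr : r ∈ spinRels n) :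
    PresentedGroup.mk (spinRels n) r = 1 :=
  (QuotientGroup.eq_one_iff r).mpr (Subgroup.subset_normalClosure hr)

lemma z_sq (n : ℕ) : spinZ n ^ 2 = 1 := by
  have h := mk_rel (n := n) (Or.inl (Or.inl (Or.inl (Or.inl rfl))))
  simpa [spinZ, PresentedGroup.of, map_pow] using h

lemma t_sq (i : Fin (n - 1)) : spinT n i ^ 2 = spinZ n := by
  have h := mk_rel (n := n) (Or.inl (Or.inl (Or.inl (Or.inr ⟨i, rfl⟩))))
  rw [map_mul, map_inv, map_pow] at h
  rw [← mul_inv_eq_one]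
  exact h

lemma braid_rel (i j : Fin (n - 1)) (hij : (j : ℕ) = (i : ℕ) + 1) :
    (spinT n i * spinT n j) ^ 3 = spinZ n := by
  have h := mk_rel (n := n) (Or.inl (Or.inl (Or.inr ⟨i, j, hij, rfl⟩)))
  rw [map_mul, map_inv, map_pow, map_mul] at h
  rw [← mul_inv_eq_one]
  exact h

lemma comm_rel (i j : Fin (n - 1)) (hij : 1 < |((i : ℕ) : ℤ) - ((j : ℕ) : ℤ)|) :
    spinT n i * spinT n j = spinZ n * (spinT n j * spinT n i) := by
  have h := mk_rel (n := n) (Or.inl (Or.inr ⟨i, j, hij, rfl⟩))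
  rw [map_mul, map_inv, map_mul, map_mul, map_mul] at h
  rw [mul_inv_eq_one] at h
  exact h.trans (mul_assoc _ _ _)

lemma zt_comm (i : Fin (n - 1)) : spinZ n * spinT n i = spinT n i * spinZ n := by
  have h := mk_rel (n := n) (Or.inr ⟨i, rfl⟩)
  rw [map_mul, map_inv, map_mul, map_mul] at h
  rw [mul_inv_eq_one] at h
  exact h

lemma z_mem_center (n : ℕ) : spinZ n ∈ Subgroup.center (SpinGroup n) := by
  rw [Subgroup.mem_center_iff]
  intro g
  have : g ∈ Subgroup.centralizer {spinZ n} := by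
    refine PresentedGroup.generated_by _ _ (fun j => ?_) g
    rw [Subgroup.mem_centralizer_iff]
    rintro h (rfl : h = spinZ n)
    cases j with
    | none => rfl
    | some i => exact zt_comm i
  exact ((Subgroup.mem_centralizer_iff.mp this) _ rfl).symm

lemma z_comm (g : SpinGroup n) : spinZ n * g = g * spinZ n :=
  ((Subgroup.mem_center_iff.mp (z_mem_center n)) g).symm

lemma t_inv (i : Fin (n - 1)) : (spinT n i)⁻¹ = spinZ n * spinT n i := by
  rw [eq_comm, eq_inv_iff_mul_eq_one, mul_assoc, ← pow_two, t_sq, ← pow_two, z_sq]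

lemma z_inv (n : ℕ) : (spinZ n)⁻¹ = spinZ n := by
  rw [eq_comm, eq_inv_iff_mul_eq_one, ← pow_two, z_sq]

lemma z_mul_mul (g h : SpinGroup n) :
    spinZ n * g * (spinZ n * h) = g * h := by
  calc spinZ n * g * (spinZ n * h) = spinZ n * (g * spinZ n) * h := by group
  _ = spinZ n * (spinZ n * g) * h := by rw [← z_comm]
  _ = (spinZ n * spinZ n) * (g * h) := by group
  _ = g * h := by rw [← pow_two, z_sq, one_mul]

lemma braid (i j : Fin (n - 1)) (hij : (j : ℕ) = (i : ℕ) + 1) :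
    spinT n i * spinT n j * spinT n i = spinT n j * spinT n i * spinT n j := by
  have h : spinT n i * spinT n j * spinT n i * (spinT n j * spinT n i * spinT n j)
      = spinZ n := by
    have h3 := braid_rel i j hij
    rw [pow_succ, pow_succ, pow_one] at h3
    calc spinT n i * spinT n j * spinT n i * (spinT n j * spinT n i * spinT n j)
        = spinT n i * spinT n j * (spinT n i * spinT n j) * (spinT n i * spinT n j) := by
          group
    _ = spinZ n := h3
  have h2 : spinT n i * spinT n j * spinT n i
      = spinZ n * (spinT n j * spinT n i * spinT n j)⁻¹ := by
    rw [← h]; group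
  rw [h2, mul_inv_rev, mul_inv_rev, t_inv, t_inv, z_mul_mul]
  calc spinZ n * (spinZ n * spinT n j * (spinT n i * spinT n j))
      = (spinZ n * spinZ n) * (spinT n j * (spinT n i * spinT n j)) := by group
  _ = spinT n j * spinT n i * spinT n j := by rw [← pow_two, z_sq, one_mul, mul_assoc]

end SpinProof
namespace SpinProof

variable {n : ℕ}

/-- The bilinear form `B x y = -(1/2) ∑ xᵢ yᵢ`. -/
noncomputable def bForm (n : ℕ) : LinearMap.BilinMap ℚ (Fin n → ℚ) ℚ :=
  LinearMap.mk₂ ℚ (fun x y => ∑ i, -(2⁻¹ : ℚ) * (x i * y i))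
    (fun x x' y => by simp [add_mul, mul_add, Finset.sum_add_distrib])
    (fun c x y => by
      simp [Finset.mul_sum]; exact Finset.sum_congr rfl fun i _ => by ring)
    (fun x y y' => by simp [mul_add, Finset.sum_add_distrib])
    (fun c x y => by
      simp [Finset.mul_sum]; exact Finset.sum_congr rfl fun i _ => by ring)

noncomputable def qF (n : ℕ) : QuadraticForm ℚ (Fin n → ℚ) :=
  (bForm n).toQuadraticMap

lemma bForm_apply (x y : Fin n → ℚ) :
    bForm n x y = ∑ i, -(2⁻¹ : ℚ) * (x i * y i) := rfl

lemma bForm_single (a b : Fin n) :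
    bForm n (Pi.single a 1) (Pi.single b 1) = if a = b then -(2⁻¹ : ℚ) else 0 := by
  by_cases hab : a = b
  · subst hab
    rw [if_pos rfl, bForm_apply, Finset.sum_eq_single a]
    · simp
    · intro x _ hx; simp [Pi.single_apply, hx]
    · simp
  · rw [if_neg hab, bForm_apply]
    apply Finset.sum_eq_zero
    intro x _
    rcases eq_or_ne x a with rfl | hx
    · simp [Pi.single_apply, hab]
    · simp [Pi.single_apply, hx]

/-- The vector `e_i - e_{i+1}`. -/
noncomputable def vv (i : Fin (n - 1)) : Fin n → ℚ :=
  Pi.single (finL i) 1 - Pi.single (finR i) 1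

lemma bForm_vv (i j : Fin (n - 1)) :
    bForm n (vv i) (vv j) =
      (if finL i = finL j then -(2⁻¹ : ℚ) else 0) - (if finL i = finR j then -(2⁻¹:ℚ) else 0)
      - (if finR i = finL j then -(2⁻¹:ℚ) else 0) + (if finR i = finR j then -(2⁻¹:ℚ) else 0)
    := by
  rw [vv, vv]
  simp only [map_sub, LinearMap.sub_apply, bForm_single]
  ring

lemma finL_eq_finL {i j : Fin (n - 1)} : finL i = finL j ↔ (i : ℕ) = (j : ℕ) := by
  rw [Fin.ext_iff]; simp [finL]

lemma finL_eq_finR {i j : Fin (n - 1)} : finL i = finR j ↔ (i : ℕ) = (j : ℕ) + 1 := by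
  rw [Fin.ext_iff]; simp [finL, finR]

lemma finR_eq_finL {i j : Fin (n - 1)} : finR i = finL j ↔ (i : ℕ) + 1 = (j : ℕ) := by
  rw [Fin.ext_iff]; simp [finL, finR]

lemma finR_eq_finR {i j : Fin (n - 1)} : finR i = finR j ↔ (i : ℕ) = (j : ℕ) := by
  rw [Fin.ext_iff]; simp [finR]

lemma qF_vv (i : Fin (n - 1)) : qF n (vv i) = -1 := by
  rw [qF, LinearMap.BilinMap.toQuadraticMap_apply, bForm_vv]
  have h1 : finL i ≠ finR i := by
    intro h; have := finL_eq_finR.mp h; omega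
  have h2 : finR i ≠ finL i := by
    intro h; have := finR_eq_finL.mp h; omega
  simp [h1, h2]
  norm_num

lemma polar_vv_adj (i j : Fin (n - 1)) (hij : (j : ℕ) = (i : ℕ) + 1) :
    QuadraticMap.polar (qF n) (vv i) (vv j) = 1 := by
  have hp : QuadraticMap.polar (qF n) (vv i) (vv j)
      = bForm n (vv i) (vv j) + bForm n (vv j) (vv i) :=
    LinearMap.BilinMap.polar_toQuadraticMap _ _
  rw [hp, bForm_vv, bForm_vv]
  simp only [finL_eq_finL, finL_eq_finR, finR_eq_finL, finR_eq_finR]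
  have e1 : ¬((i:ℕ) = (j:ℕ)) := by omega
  have e2 : ¬((i:ℕ) = (j:ℕ) + 1) := by omega
  have e3 : (i:ℕ) + 1 = (j:ℕ) := by omega
  have e4 : ¬((j:ℕ) = (i:ℕ)) := by omega
  have e5 : (j:ℕ) = (i:ℕ) + 1 := hij
  have e6 : ¬((j:ℕ) + 1 = (i:ℕ)) := by omega
  simp only [if_pos e3, if_pos e5, if_neg e1, if_neg e2, if_neg e4, if_neg e6]
  norm_num

lemma polar_vv_far (i j : Fin (n - 1)) (hij : 1 < |((i : ℕ) : ℤ) - ((j : ℕ) : ℤ)|) :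
    QuadraticMap.polar (qF n) (vv i) (vv j) = 0 := by
  have hp : QuadraticMap.polar (qF n) (vv i) (vv j)
      = bForm n (vv i) (vv j) + bForm n (vv j) (vv i) :=
    LinearMap.BilinMap.polar_toQuadraticMap _ _
  rw [hp, bForm_vv, bForm_vv]
  simp only [finL_eq_finL, finL_eq_finR, finR_eq_finL, finR_eq_finR]
  have hd := lt_abs.mp hij
  have e1 : ¬((i:ℕ) = (j:ℕ)) := by omega
  have e2 : ¬((i:ℕ) = (j:ℕ) + 1) := by omega
  have e3 : ¬((i:ℕ) + 1 = (j:ℕ)) := by omega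
  have e4 : ¬((j:ℕ) = (i:ℕ)) := by omega
  have e5 : ¬((j:ℕ) = (i:ℕ) + 1) := by omega
  have e6 : ¬((j:ℕ) + 1 = (i:ℕ)) := by omega
  simp only [if_neg e1, if_neg e2, if_neg e3, if_neg e4, if_neg e5, if_neg e6]
  norm_num

end SpinProof
namespace SpinProof

variable {n : ℕ}

noncomputable local instance : Invertible (2 : ℚ) := invertibleOfNonzero (by norm_num)

lemma cliff_algebraMap_inj (n : ℕ) :
    Function.Injective (algebraMap ℚ (CliffordAlgebra (qF n))) := by
  intro r s h
  have h2 := congrArg (CliffordAlgebra.equivExterior (qF n)) h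
  simp only [CliffordAlgebra.equivExterior, CliffordAlgebra.changeFormEquiv_apply,
    CliffordAlgebra.changeForm_algebraMap] at h2
  exact (ExteriorAlgebra.algebraMap_inj (M := Fin n → ℚ) r s).mp h2

lemma cliff_neg_one_ne_one (n : ℕ) :
    (-1 : CliffordAlgebra (qF n)) ≠ 1 := by
  intro h
  have : algebraMap ℚ (CliffordAlgebra (qF n)) (-1) = algebraMap ℚ _ 1 := by
    rw [map_one, map_neg, map_one, h]
  have := cliff_algebraMap_inj n this
  norm_num at this

lemma iota_sq (i : Fin (n - 1)) :
    CliffordAlgebra.ι (qF n) (vv i) * CliffordAlgebra.ι (qF n) (vv i) = -1 := by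
  rw [CliffordAlgebra.ι_sq_scalar, qF_vv, map_neg, map_one]

/-- The generator images as units of the Clifford algebra. -/
noncomputable def uT (i : Fin (n - 1)) : (CliffordAlgebra (qF n))ˣ where
  val := CliffordAlgebra.ι (qF n) (vv i)
  inv := -CliffordAlgebra.ι (qF n) (vv i)
  val_inv := by rw [mul_neg, iota_sq]; norm_num
  inv_val := by rw [neg_mul, iota_sq]; norm_num

lemma uT_val (i : Fin (n - 1)) :
    ((uT i : (CliffordAlgebra (qF n))ˣ) : CliffordAlgebra (qF n))
      = CliffordAlgebra.ι (qF n) (vv i) := rfl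

noncomputable def cliffGen (n : ℕ) : Option (Fin (n - 1)) → (CliffordAlgebra (qF n))ˣ
  | none => -1
  | some i => uT i

lemma cliff_rels (n : ℕ) :
    ∀ r ∈ spinRels n, FreeGroup.lift (cliffGen n) r = 1 := by
  rintro r (((( hr | ⟨i, hr⟩) | ⟨i, j, hij, hr⟩) | ⟨i, j, hij, hr⟩) | ⟨i, hr⟩) <;> subst hr <;>
    simp only [map_mul, map_pow, map_inv, FreeGroup.lift_apply_of, mul_inv_eq_one] <;>
    rw [Units.ext_iff] <;>
    simp only [cliffGen, Units.val_pow_eq_pow_val, Units.val_mul, Units.val_neg,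
      Units.val_one, uT_val]
  · -- z² = 1
    norm_num
  · -- tᵢ² = z
    rw [pow_two, iota_sq]
  · -- braid relation
    set a := CliffordAlgebra.ι (qF n) (vv i)
    set b := CliffordAlgebra.ι (qF n) (vv j)
    have hba : b * a = algebraMap ℚ _ 1 - a * b := by
      have := CliffordAlgebra.ι_mul_ι_comm (Q := qF n) (vv j) (vv i)
      rw [this, QuadraticMap.polar_comm, polar_vv_adj i j hij]
    have h1 : algebraMap ℚ (CliffordAlgebra (qF n)) 1 = 1 := map_one _
    have haa : a * a = -1 := iota_sq i
    have hbb : b * b = -1 := iota_sq j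
    have hx2 : (a * b) ^ 2 = a * b - 1 := by
      calc (a * b) ^ 2 = a * (b * a) * b := by noncomm_ring
      _ = a * (1 - a * b) * b := by rw [hba, h1]
      _ = a * b - (a * a) * (b * b) := by noncomm_ring
      _ = a * b - 1 := by rw [haa, hbb]; noncomm_ring
    calc (a * b) ^ 3 = (a * b) ^ 2 * (a * b) := by noncomm_ring
    _ = (a * b - 1) * (a * b) := by rw [hx2]
    _ = (a * b) ^ 2 - a * b := by noncomm_ring
    _ = -1 := by rw [hx2]; noncomm_ring
  · -- far commutation
    have := CliffordAlgebra.ι_mul_ι_comm (Q := qF n) (vv i) (vv j)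
    rw [this, polar_vv_far i j hij, map_zero]
    noncomm_ring
  · -- z central
    noncomm_ring

lemma z_ne_one (n : ℕ) : spinZ n ≠ 1 := by
  intro h
  have hφ := PresentedGroup.toGroup.of (cliff_rels n) (x := (none : Option (Fin (n - 1))))
  rw [show PresentedGroup.of none = spinZ n from rfl, h, map_one] at hφ
  have : ((1 : (CliffordAlgebra (qF n))ˣ) : CliffordAlgebra (qF n))
      = ((cliffGen n none : (CliffordAlgebra (qF n))ˣ) : CliffordAlgebra (qF n)) :=
    congrArg _ hφ
  simp only [cliffGen, Units.val_one, Units.val_neg] at this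
  exact cliff_neg_one_ne_one n this.symm

end SpinProof
namespace SpinProof

variable {n : ℕ}

/-- The generator `t_m` of `SpinGroup (n+1)`, indexed by a natural number. -/
noncomputable def tt (n : ℕ) (m : ℕ) : SpinGroup (n + 1) :=
  if h : m < n then spinT (n + 1) ⟨m, by omega⟩ else 1

lemma tt_eq (m : ℕ) (h : m < n) : tt n m = spinT (n + 1) ⟨m, by omega⟩ := dif_pos h

lemma tt_spinT (i : Fin (n + 1 - 1)) : spinT (n + 1) i = tt n i.val := by
  have h : i.val < n := by have := i.isLt; omega
  have h2 : (⟨i.val, by omega⟩ : Fin (n + 1 - 1)) = i := Fin.ext rfl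
  rw [tt_eq _ h, h2]

lemma tt_sq {m : ℕ} (h : m < n) : tt n m ^ 2 = spinZ (n + 1) := by
  rw [tt_eq m h]; exact t_sq _

lemma tt_comm {m q : ℕ} (hq : q < n) (h : m + 1 < q) :
    tt n q * tt n m = spinZ (n + 1) * (tt n m * tt n q) := by
  have hm : m < n := by omega
  rw [tt_eq m hm, tt_eq q hq]
  refine comm_rel _ _ ?_
  rw [lt_abs]
  left
  simp only [Fin.val_mk]
  omega

lemma comm_flip {N : ℕ} {a b : SpinGroup N} (h : a * b = spinZ N * (b * a)) :
    b * a = spinZ N * (a * b) := by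
  rw [h, ← mul_assoc, ← pow_two, z_sq, one_mul]

lemma tt_comm' {m q : ℕ} (hq : q < n) (h : m + 1 < q) :
    tt n m * tt n q = spinZ (n + 1) * (tt n q * tt n m) :=
  comm_flip (tt_comm hq h)

lemma tt_braid {m : ℕ} (h : m + 1 < n) :
    tt n m * tt n (m + 1) * tt n m = tt n (m + 1) * tt n m * tt n (m + 1) := by
  rw [tt_eq m (by omega), tt_eq (m + 1) h]
  exact braid _ _ (by simp)

/-- The coset representatives `w_k = t_{n-1} t_{n-2} ⋯ t_{n-k}`. -/
noncomputable def ww (n : ℕ) : ℕ → SpinGroup (n + 1)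
  | 0 => 1
  | k + 1 => ww n k * tt n (n - 1 - k)

lemma ww_comm : ∀ k m : ℕ, m + k + 1 < n →
    ww n k * tt n m = spinZ (n + 1) ^ k * (tt n m * ww n k) := by
  intro k
  induction k with
  | zero => intro m _; simp [ww]
  | succ k ih =>
    intro m hm
    have hc : tt n (n - 1 - k) * tt n m
        = spinZ (n + 1) * (tt n m * tt n (n - 1 - k)) :=
      tt_comm (by omega) (by omega)
    calc ww n (k + 1) * tt n m
        = ww n k * (tt n (n - 1 - k) * tt n m) := by rw [ww]; group
      _ = ww n k * (spinZ (n + 1) * (tt n m * tt n (n - 1 - k))) := by rw [hc]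
      _ = (ww n k * spinZ (n + 1)) * (tt n m * tt n (n - 1 - k)) := by group
      _ = spinZ (n + 1) * ((ww n k * tt n m) * tt n (n - 1 - k)) := by
          rw [← z_comm]; group
      _ = spinZ (n + 1) * ((spinZ (n + 1) ^ k * (tt n m * ww n k)) * tt n (n - 1 - k)) := by
          rw [ih m (by omega)]
      _ = spinZ (n + 1) ^ (k + 1) * (tt n m * ww n (k + 1)) := by rw [ww]; group

lemma ww_braid : ∀ k, k ≤ n → ∀ m, m < n → n < m + k →
    ∃ e : ℕ, ww n k * tt n m = spinZ (n + 1) ^ e * (tt n (m - 1) * ww n k) := by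
  intro k
  induction k with
  | zero => intro _ m _ h; omega
  | succ k ih =>
    intro hk m hm hmk
    rcases Nat.lt_or_ge n (m + k) with hgt | hge
    · -- n < m + k : induction applies
      obtain ⟨e, he⟩ := ih (by omega) m hm hgt
      have hc : tt n (n - 1 - k) * tt n m
          = spinZ (n + 1) * (tt n m * tt n (n - 1 - k)) :=
        tt_comm' hm (by omega)
      refine ⟨e + 1, ?_⟩
      calc ww n (k + 1) * tt n m
          = ww n k * (tt n (n - 1 - k) * tt n m) := by rw [ww]; group
        _ = ww n k * (spinZ (n + 1) * (tt n m * tt n (n - 1 - k))) := by rw [hc]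
        _ = (ww n k * spinZ (n + 1)) * (tt n m * tt n (n - 1 - k)) := by group
        _ = spinZ (n + 1) * ((ww n k * tt n m) * tt n (n - 1 - k)) := by
            rw [← z_comm]; group
        _ = spinZ (n + 1) * ((spinZ (n + 1) ^ e * (tt n (m - 1) * ww n k))
              * tt n (n - 1 - k)) := by rw [he]
        _ = spinZ (n + 1) ^ (e + 1) * (tt n (m - 1) * ww n (k + 1)) := by rw [ww]; group
    · -- n = m + k (the case n > m + k is impossible since n < m + k + 1)
      have hnk : n = m + k := by omega
      have hk1 : 1 ≤ k := by omega
      obtain ⟨k', rfl⟩ : ∃ k', k = k' + 1 := ⟨k - 1, by omega⟩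
      have hm1 : 1 ≤ m := by omega
      have e1 : n - 1 - k' = m := by omega
      have e2 : n - 1 - (k' + 1) = m - 1 := by omega
      have hbr : tt n (m - 1) * tt n m * tt n (m - 1)
          = tt n m * tt n (m - 1) * tt n m := by
        have := tt_braid (n := n) (m := m - 1) (by omega)
        rw [show m - 1 + 1 = m by omega] at this
        exact this
      have harith : (m - 1) + k' + 1 < n := by omega
      have hcm : ww n k' * tt n (m - 1)
          = spinZ (n + 1) ^ k' * (tt n (m - 1) * ww n k') :=
        ww_comm k' (m - 1) harith
      refine ⟨k', ?_⟩
      calc ww n (k' + 1 + 1) * tt n m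
          = ww n k' * (tt n m * tt n (m - 1) * tt n m) := by
            rw [ww, ww, e1, e2]; group
        _ = ww n k' * (tt n (m - 1) * tt n m * tt n (m - 1)) := by rw [hbr]
        _ = (ww n k' * tt n (m - 1)) * (tt n m * tt n (m - 1)) := by group
        _ = (spinZ (n + 1) ^ k' * (tt n (m - 1) * ww n k')) * (tt n m * tt n (m - 1)) := by
            rw [hcm]
        _ = spinZ (n + 1) ^ k' * (tt n (m - 1) * ww n (k' + 1 + 1)) := by
            rw [ww, ww, e1, e2]; group

lemma coset_step (H : Subgroup (SpinGroup (n + 1))) (hzH : spinZ (n + 1) ∈ H)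
    (htH : ∀ m, m + 1 < n → tt n m ∈ H) :
    ∀ k, k ≤ n → ∀ m, m < n →
      ∃ x ∈ H, ∃ k', k' ≤ n ∧ ww n k * tt n m = x * ww n k' := by
  intro k hk m hm
  rcases Nat.lt_or_ge (m + k + 1) n with hlt | hge
  · -- commute past everything
    refine ⟨spinZ (n + 1) ^ k * tt n m, mul_mem (pow_mem hzH k) (htH m (by omega)), k, hk, ?_⟩
    rw [ww_comm k m hlt]; group
  rcases Nat.eq_or_lt_of_le hge with heq | hgt
  · -- extension : m = n - 1 - k
    refine ⟨1, one_mem H, k + 1, by omega, ?_⟩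
    rw [one_mul, ww, show n - 1 - k = m by omega]
  rcases Nat.eq_or_lt_of_le hgt with heq2 | hgt2
  · -- contraction : m = n - k
    have hk1 : 1 ≤ k := by omega
    obtain ⟨k', rfl⟩ : ∃ k', k = k' + 1 := ⟨k - 1, by omega⟩
    have e1 : n - 1 - k' = m := by omega
    refine ⟨spinZ (n + 1), hzH, k', by omega, ?_⟩
    have c1 : ww n (k' + 1) * tt n m = ww n k' * (tt n m ^ 2) := by
      rw [ww, e1, pow_two, mul_assoc]
    rw [c1, tt_sq hm, ← z_comm]
  · -- braid case : n < m + k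
    obtain ⟨e, he⟩ := ww_braid k hk m hm (by omega)
    refine ⟨spinZ (n + 1) ^ e * tt n (m - 1), mul_mem (pow_mem hzH e) (htH (m - 1) (by omega)),
      k, hk, ?_⟩
    rw [he]; group

lemma cover (H : Subgroup (SpinGroup (n + 1))) (hzH : spinZ (n + 1) ∈ H)
    (htH : ∀ m, m + 1 < n → tt n m ∈ H) (g : SpinGroup (n + 1)) :
    ∃ x ∈ H, ∃ k, k ≤ n ∧ g = x * ww n k := by
  set S : Set (SpinGroup (n + 1)) := {g | ∃ x ∈ H, ∃ k, k ≤ n ∧ g = x * ww n k} with hS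
  have hS1 : (1 : SpinGroup (n + 1)) ∈ S := ⟨1, one_mem H, 0, by omega, by simp [ww]⟩
  have hmulz : ∀ s ∈ S, s * spinZ (n + 1) ∈ S := by
    rintro s ⟨x, hx, k, hk, rfl⟩
    refine ⟨x * spinZ (n + 1), mul_mem hx hzH, k, hk, ?_⟩
    rw [mul_assoc, mul_assoc, ← z_comm]
  have hmult : ∀ s ∈ S, ∀ m, m < n → s * tt n m ∈ S := by
    rintro s ⟨x, hx, k, hk, rfl⟩ m hm
    obtain ⟨y, hy, k', hk', hww⟩ := coset_step H hzH htH k hk m hm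
    exact ⟨x * y, mul_mem hx hy, k', hk', by rw [mul_assoc, hww, mul_assoc]⟩
  have key : ∀ u : FreeGroup (Option (Fin (n + 1 - 1))), ∀ s ∈ S,
      s * PresentedGroup.mk (spinRels (n + 1)) u ∈ S := by
    intro u
    induction u using FreeGroup.induction_on with
    | C1 => intro s hs; simpa using hs
    | of x =>
      intro s hs
      cases x with
      | none => exact hmulz s hs
      | some i =>
        show s * PresentedGroup.mk (spinRels (n + 1)) (FreeGroup.of (some i)) ∈ S
        rw [show PresentedGroup.mk (spinRels (n + 1)) (FreeGroup.of (some i))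
            = tt n i.val from tt_spinT i]
        exact hmult s hs i.val (by have := i.isLt; omega)
    | inv_of x _ =>
      intro s hs
      rw [map_inv]
      cases x with
      | none =>
        show s * (PresentedGroup.mk (spinRels (n + 1)) (FreeGroup.of none))⁻¹ ∈ S
        rw [show (PresentedGroup.mk (spinRels (n + 1)) (FreeGroup.of none))⁻¹
            = spinZ (n + 1) from z_inv (n + 1)]
        exact hmulz s hs
      | some i =>
        show s * (PresentedGroup.mk (spinRels (n + 1)) (FreeGroup.of (some i)))⁻¹ ∈ S
        have h3 : (PresentedGroup.mk (spinRels (n + 1)) (FreeGroup.of (some i)))⁻¹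
            = spinZ (n + 1) * tt n i.val := by
          rw [show PresentedGroup.mk (spinRels (n + 1)) (FreeGroup.of (some i))
              = spinT (n + 1) i from rfl, t_inv, tt_spinT]
        rw [h3, ← mul_assoc]
        exact hmult _ (hmulz s hs) i.val (by have := i.isLt; omega)
    | mul u v hu hv =>
      intro s hs
      rw [map_mul, ← mul_assoc]
      exact hv _ (hu _ hs)
  obtain ⟨u, rfl⟩ := PresentedGroup.mk_surjective (spinRels (n + 1)) g
  have := key u 1 hS1
  simpa [hS] using this

end SpinProof
namespace SpinProof

variable {n : ℕ}

/-- Images of the generators of `SpinGroup n` inside `SpinGroup (n+1)`. -/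
noncomputable def incGen (n : ℕ) : Option (Fin (n - 1)) → SpinGroup (n + 1)
  | none => spinZ (n + 1)
  | some i => spinT (n + 1) ⟨i.val, by have := i.isLt; omega⟩

lemma inc_rels (n : ℕ) :
    ∀ r ∈ spinRels n, FreeGroup.lift (incGen n) r = 1 := by
  rintro r (((( hr | ⟨i, hr⟩) | ⟨i, j, hij, hr⟩) | ⟨i, j, hij, hr⟩) | ⟨i, hr⟩) <;> subst hr <;>
    simp only [map_mul, map_pow, map_inv, FreeGroup.lift_apply_of, mul_inv_eq_one, incGen]
  · exact z_sq (n + 1)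
  · exact t_sq _
  · exact braid_rel _ _ (by simpa using hij)
  · exact comm_rel _ _ (by simpa using hij)
  · exact zt_comm _

/-- The natural homomorphism `SpinGroup n →* SpinGroup (n+1)`. -/
noncomputable def incHom (n : ℕ) : SpinGroup n →* SpinGroup (n + 1) :=
  PresentedGroup.toGroup (inc_rels n)

lemma incHom_z : incHom n (spinZ n) = spinZ (n + 1) :=
  PresentedGroup.toGroup.of (inc_rels n) (x := none)

lemma incHom_t (i : Fin (n - 1)) :
    incHom n (spinT n i) = spinT (n + 1) ⟨i.val, by have := i.isLt; omega⟩ :=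
  PresentedGroup.toGroup.of (inc_rels n) (x := some i)

lemma zpow_cases {G : Type*} [Group G] {z : G} (h : z ^ 2 = 1) (k : ℤ) :
    z ^ k = 1 ∨ z ^ k = z := by
  have h2 : z ^ (2 : ℤ) = 1 := by rw [zpow_two, ← pow_two, h]
  have hk : k = 2 * (k / 2) + k % 2 := (Int.mul_ediv_add_emod k 2).symm
  have : z ^ k = z ^ (k % 2) := by
    conv_lhs => rw [hk]
    rw [zpow_add, zpow_mul, h2, one_zpow, one_mul]
  rcases Int.emod_two_eq_zero_or_one k with h0 | h1
  · left; rw [this, h0, zpow_zero]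
  · right; rw [this, h1, zpow_one]

lemma spin_finite_card : ∀ n : ℕ,
    Finite (SpinGroup n) ∧ Nat.card (SpinGroup n) ≤ 2 * n.factorial := by
  intro n
  induction n with
  | zero =>
    have hsurj : Function.Surjective
        (fun b : Bool => if b then spinZ 0 else (1 : SpinGroup 0)) := by
      intro g
      have hg : g ∈ Subgroup.zpowers (spinZ 0) := by
        refine PresentedGroup.generated_by _ _ (fun j => ?_) g
        cases j with
        | none => exact Subgroup.mem_zpowers _
        | some i => exact i.elim0
      obtain ⟨k, rfl⟩ := Subgroup.mem_zpowers_iff.mp hg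
      rcases zpow_cases (z_sq 0) k with h | h
      · exact ⟨false, h.symm⟩
      · exact ⟨true, h.symm⟩
    have hfin : Finite (SpinGroup 0) := Finite.of_surjective _ hsurj
    refine ⟨hfin, ?_⟩
    have := Nat.card_le_card_of_surjective _ hsurj
    simpa using this
  | succ n ih =>
    obtain ⟨hfin, hcard⟩ := ih
    set H : Subgroup (SpinGroup (n + 1)) := (incHom n).range with hH
    have hfinH : Finite H :=
      Finite.of_surjective _ (incHom n).rangeRestrict_surjective
    have hcardH : Nat.card H ≤ Nat.card (SpinGroup n) :=
      Nat.card_le_card_of_surjective _ (incHom n).rangeRestrict_surjective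
    have hzH : spinZ (n + 1) ∈ H := ⟨spinZ n, incHom_z⟩
    have htH : ∀ m, m + 1 < n → tt n m ∈ H := by
      intro m hm
      refine ⟨spinT n ⟨m, by omega⟩, ?_⟩
      rw [incHom_t, tt_eq m (by omega)]
    have hsurjF : Function.Surjective
        (fun p : H × Fin (n + 1) => (p.1 : SpinGroup (n + 1)) * ww n p.2.val) := by
      intro g
      obtain ⟨x, hx, k, hk, rfl⟩ := cover H hzH htH g
      exact ⟨(⟨x, hx⟩, ⟨k, by omega⟩), rfl⟩
    have hfin1 : Finite (SpinGroup (n + 1)) := Finite.of_surjective _ hsurjF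
    refine ⟨hfin1, ?_⟩
    have h1 : Nat.card (SpinGroup (n + 1)) ≤ Nat.card (H × Fin (n + 1)) :=
      Nat.card_le_card_of_surjective _ hsurjF
    rw [Nat.card_prod] at h1
    have h2 : Nat.card (Fin (n + 1)) = n + 1 := by simp
    rw [h2] at h1
    calc Nat.card (SpinGroup (n + 1)) ≤ Nat.card H * (n + 1) := h1
      _ ≤ (2 * n.factorial) * (n + 1) := by
          exact Nat.mul_le_mul_right _ (le_trans hcardH hcard)
      _ = 2 * (n + 1).factorial := by rw [Nat.factorial_succ]; ring

end SpinProof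
/-- The kernel of `θₙ : S̃ₙ → Sₙ` is exactly `{1, z}`, the element `z` is central
of order 2 in `S̃ₙ` (in particular `z ≠ 1`), and consequently `|S̃ₙ| = 2·n!`. -/
theorem spin_cover_kernel_center_card (n : ℕ) (hn : 1 ≤ n)
    (θ : SpinGroup n →* Equiv.Perm (Fin n))
    (hT : ∀ i : Fin (n - 1), θ (spinT n i) = Equiv.swap (finL i) (finR i))
    (hZ : θ (spinZ n) = 1)
    (hsurj : Function.Surjective θ) :
    (∀ x : SpinGroup n, θ x = 1 ↔ x = 1 ∨ x = spinZ n) ∧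
    spinZ n ∈ Subgroup.center (SpinGroup n) ∧
    orderOf (spinZ n) = 2 ∧
    spinZ n ≠ 1 ∧
    Nat.card (SpinGroup n) = 2 * Nat.factorial n := by
  classical
  obtain ⟨hfin, hcard⟩ := SpinProof.spin_finite_card n
  have hzne := SpinProof.z_ne_one n
  have hz2 := SpinProof.z_sq n
  have hord : orderOf (spinZ n) = 2 := orderOf_eq_prime hz2 hzne
  have hzker : spinZ n ∈ θ.ker := hZ
  have hle : Subgroup.zpowers (spinZ n) ≤ θ.ker := Subgroup.zpowers_le.mpr hzker
  have hquot : Nat.card (SpinGroup n ⧸ θ.ker) = n.factorial := by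
    rw [Nat.card_congr (QuotientGroup.quotientKerEquivOfSurjective θ hsurj).toEquiv]
    simp [Nat.card_eq_fintype_card, Fintype.card_perm]
  have hcG : Nat.card (SpinGroup n) = n.factorial * Nat.card θ.ker := by
    rw [Subgroup.card_eq_card_quotient_mul_card_subgroup θ.ker, hquot]
  have hnontriv : Nontrivial θ.ker :=
    ⟨⟨⟨spinZ n, hzker⟩, 1, by
      intro h
      exact hzne (by simpa using congrArg Subtype.val h)⟩⟩
  have h2le : 2 ≤ Nat.card θ.ker := Finite.one_lt_card
  have hfact : 0 < n.factorial := n.factorial_pos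
  have hker2 : Nat.card θ.ker = 2 := by
    have hle2 : n.factorial * Nat.card θ.ker ≤ n.factorial * 2 := by
      rw [← hcG]
      calc Nat.card (SpinGroup n) ≤ 2 * n.factorial := hcard
        _ = n.factorial * 2 := by ring
    have := Nat.le_of_mul_le_mul_left hle2 hfact
    omega
  have hcardG : Nat.card (SpinGroup n) = 2 * n.factorial := by
    rw [hcG, hker2]; ring
  have hzcard : Nat.card θ.ker ≤ Nat.card (Subgroup.zpowers (spinZ n)) := by
    rw [Nat.card_zpowers, hord, hker2]
  have hkereq : Subgroup.zpowers (spinZ n) = θ.ker :=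
    Subgroup.eq_of_le_of_card_ge hle hzcard
  refine ⟨?_, SpinProof.z_mem_center n, hord, hzne, hcardG⟩
  intro x
  constructor
  · intro hx
    have hxk : x ∈ Subgroup.zpowers (spinZ n) := by rw [hkereq]; exact hx
    obtain ⟨k, rfl⟩ := Subgroup.mem_zpowers_iff.mp hxk
    exact SpinProof.zpow_cases hz2 k
  · rintro (rfl | rfl)
    · exact map_one θ
    · exact hZ
end

section
/- Let f : G̃ → G be a surjective homomorphism of finite groups whose kernel is {1, z}, where z is a central element of G̃ with z ≠ 1. For every x̃ ∈ G̃: if x̃ is conjugate to z·x̃ in G̃, then the centralizer of x̃ in G̃ has the same order as the centralizer of f(x̃) in G; if x̃ is not conjugate to z·x̃, then the centralizer of x̃ in G̃ has order 2·|C_G(f(x̃))|. -/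
private lemma card_eq_range_mul_ker {K L : Type*} [Group K] [Group L] (φ : K →* L) :
    Nat.card K = Nat.card φ.range * Nat.card φ.ker := by
  rw [Subgroup.card_eq_card_quotient_mul_card_subgroup φ.ker,
    Nat.card_congr (QuotientGroup.quotientKerEquivRange φ).toEquiv]

/-- Let `f : G̃ → G` be a surjective homomorphism of finite groups with kernel `{1, z}`,
where `z ≠ 1` is central in `G̃`.  For every `x̃ ∈ G̃`: if `x̃` is conjugate to `z·x̃`
(non-split), then `|C_{G̃}(x̃)| = |C_G(f(x̃))|`; if `x̃` is not conjugate to `z·x̃`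
(split), then `|C_{G̃}(x̃)| = 2·|C_G(f(x̃))|`. -/
theorem centralizer_card_of_double_cover (G' G : Type) [Group G'] [Group G]
    [Finite G'] [Finite G] (f : G' →* G) (hf : Function.Surjective f)
    (z : G') (hz1 : z ≠ 1) (hzc : z ∈ Subgroup.center G')
    (hker : ∀ y : G', f y = 1 ↔ y = 1 ∨ y = z) (x : G') :
    (IsConj x (z * x) →
      Nat.card (Subgroup.centralizer {x} : Subgroup G') =
        Nat.card (Subgroup.centralizer {f x} : Subgroup G)) ∧
    (¬ IsConj x (z * x) →
      Nat.card (Subgroup.centralizer {x} : Subgroup G') =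
        2 * Nat.card (Subgroup.centralizer {f x} : Subgroup G)) := by
  have hfz : f z = 1 := (hker z).mpr (Or.inr rfl)
  have hz2 : z * z = 1 := by
    rcases (hker (z * z)).mp (by simp [hfz]) with h | h
    · exact h
    · exact absurd (mul_left_cancel (h.trans (mul_one z).symm)) hz1
  have hzcen : ∀ u : G', u * z = z * u := Subgroup.mem_center_iff.mp hzc
  set H : Subgroup G' := (Subgroup.centralizer {f x}).comap f with hH
  have hmemH : ∀ g : G', g ∈ H ↔ f x * f g = f g * f x := by
    intro g
    simp [hH, Subgroup.mem_comap, Subgroup.mem_centralizer_iff]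
  -- commutator criterion for membership in H
  have hcomm : ∀ g : G', g ∈ H ↔ (g * x * g⁻¹ * x⁻¹ = 1 ∨ g * x * g⁻¹ * x⁻¹ = z) := by
    intro g
    rw [hmemH, ← hker]
    simp only [map_mul, map_inv]
    constructor
    · intro h; rw [← h]; group
    · intro h
      have h1 : f g * f x * (f g)⁻¹ = f x := mul_inv_eq_one.mp h
      exact (mul_inv_eq_iff_eq_mul.mp h1).symm
  -- the commutator homomorphism ψ : H →* G'
  let ψ : H →* G' :=
    { toFun := fun g => (g : G') * x * (g : G')⁻¹ * x⁻¹
      map_one' := by simp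
      map_mul' := by
        rintro a b
        have hw := (hcomm (b : G')).mp b.2
        set w : G' := (b : G') * x * (b : G')⁻¹ * x⁻¹ with hwdef
        have hbx : (b : G') * x * (b : G')⁻¹ = w * x := by rw [hwdef]; group
        have hcw : ∀ u : G', u * w = w * u := by
          rcases hw with h | h
          · intro u; rw [h]; simp
          · intro u; rw [h]; exact hzcen u
        push_cast
        calc (a : G') * (b : G') * x * ((a : G') * (b : G'))⁻¹ * x⁻¹
            = (a : G') * ((b : G') * x * (b : G')⁻¹) * (a : G')⁻¹ * x⁻¹ := by group
          _ = (a : G') * (w * x) * (a : G')⁻¹ * x⁻¹ := by rw [hbx]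
          _ = (a : G') * w * x * (a : G')⁻¹ * x⁻¹ := by group
          _ = w * (a : G') * x * (a : G')⁻¹ * x⁻¹ := by rw [← hcw]
          _ = (a : G') * x * (a : G')⁻¹ * x⁻¹ * w := by
              rw [hcw]; group }
  have hCH : Subgroup.centralizer {x} ≤ H := by
    intro g hg
    have hgx : x * g = g * x := Subgroup.mem_centralizer_iff.mp hg x rfl
    refine (hcomm g).mpr (Or.inl ?_)
    rw [← hgx]; group
  -- kernel of ψ is the centralizer of x
  have hkerψ : ψ.ker = (Subgroup.centralizer {x}).subgroupOf H := by
    ext g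
    simp only [MonoidHom.mem_ker, Subgroup.mem_subgroupOf, Subgroup.mem_centralizer_iff]
    constructor
    · intro h
      have h1 : (g : G') * x * (g : G')⁻¹ = x := by
        have := mul_inv_eq_one.mp h
        exact this
      intro m hm
      rcases Set.mem_singleton_iff.mp hm with rfl
      have := mul_inv_eq_iff_eq_mul.mp h1
      exact this.symm
    · intro h
      have h1 : x * (g : G') = (g : G') * x := h x rfl
      show (g : G') * x * (g : G')⁻¹ * x⁻¹ = 1
      rw [← h1]; group
  have hcardkerψ : Nat.card ψ.ker = Nat.card (Subgroup.centralizer {x} : Subgroup G') := by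
    rw [hkerψ]
    exact Nat.card_congr (Subgroup.subgroupOfEquivOfLe hCH).toEquiv
  -- the kernel of f is ⟨z⟩, of cardinality 2
  have horder : orderOf z = 2 := orderOf_eq_prime (by rw [pow_two]; exact hz2) hz1
  have hkerf : f.ker = Subgroup.zpowers z := by
    apply le_antisymm
    · intro g hg
      rcases (hker g).mp hg with h | h
      · rw [h]; exact Subgroup.one_mem _
      · rw [h]; exact Subgroup.mem_zpowers z
    · exact Subgroup.zpowers_le.mpr ((hker z).mpr (Or.inr rfl))
  have hcardkerf : Nat.card f.ker = 2 := by
    rw [hkerf, Nat.card_zpowers, horder]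
  -- cardinality of H via the restriction of f
  have hkerfH : f.ker ≤ H := by
    intro g hg
    rw [hmemH, hg, mul_one, one_mul]
  have hrangerestrict : (f.domRestrict H).range = Subgroup.centralizer {f x} := by
    rw [MonoidHom.domRestrict_range, hH, Subgroup.map_comap_eq_self_of_surjective hf]
  have hcardH : Nat.card H = Nat.card (Subgroup.centralizer {f x} : Subgroup G) * 2 := by
    rw [card_eq_range_mul_ker (f.domRestrict H), hrangerestrict, MonoidHom.ker_domRestrict]
    congr 1
    rw [Nat.card_congr (Subgroup.subgroupOfEquivOfLe hkerfH).toEquiv]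
    exact hcardkerf
  have hmain : Nat.card H = Nat.card ψ.range *
      Nat.card (Subgroup.centralizer {x} : Subgroup G') := by
    rw [card_eq_range_mul_ker ψ, hcardkerψ]
  constructor
  · -- non-split case
    intro hconj
    rw [isConj_iff] at hconj
    obtain ⟨c, hc'⟩ := hconj
    have hcH : c ∈ H := (hcomm c).mpr (Or.inr (by rw [hc']; group))
    have hrange : ψ.range = Subgroup.zpowers z := by
      apply le_antisymm
      · rintro _ ⟨g, rfl⟩
        rcases (hcomm (g : G')).mp g.2 with h | h
        · show (g : G') * x * (g : G')⁻¹ * x⁻¹ ∈ _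
          rw [h]; exact Subgroup.one_mem _
        · show (g : G') * x * (g : G')⁻¹ * x⁻¹ ∈ _
          rw [h]; exact Subgroup.mem_zpowers z
      · apply Subgroup.zpowers_le.mpr
        refine ⟨⟨c, hcH⟩, ?_⟩
        show c * x * c⁻¹ * x⁻¹ = z
        rw [hc']; group
    have : Nat.card ψ.range = 2 := by rw [hrange, Nat.card_zpowers, horder]
    rw [this] at hmain
    rw [hcardH] at hmain
    omega
  · -- split case
    intro hconj
    have hrange : ψ.range = ⊥ := by
      rw [eq_bot_iff]
      rintro _ ⟨g, rfl⟩
      rcases (hcomm (g : G')).mp g.2 with h | h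
      · show (g : G') * x * (g : G')⁻¹ * x⁻¹ ∈ _
        rw [h]; exact Subgroup.one_mem _
      · exfalso
        apply hconj
        rw [isConj_iff]
        refine ⟨(g : G'), ?_⟩
        have h1 : (g : G') * x * (g : G')⁻¹ * x⁻¹ * x = z * x := by rw [h]
        rw [← h1]; group
    have : Nat.card ψ.range = 1 := by rw [hrange]; exact Subgroup.card_bot
    rw [this, one_mul] at hmain
    rw [hcardH] at hmain
    omega
end

section
/- Let G be a finite group, z a central element of G of order 2, and χ the character of an irreducible finite-dimensional complex representation of G satisfying χ(z·x) = −χ(x) for all x ∈ G. Let S ⊆ G be a set of split elements (elements x not conjugate to z·x) such that every split element of G is conjugate to exactly one element of the set {s, z·s : s ∈ S}, and distinct elements of S are not conjugate nor conjugate after multiplication by z. Then Σ_{x ∈ S} |χ(x)|² / |C_G(x)| = 1/2. -/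
open CategoryTheory Module LinearMap Set

lemma charInvAux {Vs : Type} [AddCommGroup Vs] [Module ℂ Vs] [FiniteDimensional ℂ Vs]
    (f f' : Module.End ℂ Vs) (n : ℕ) (hn : n ≠ 0) (hfn : f ^ n = 1)
    (h1 : f * f' = 1) (h2 : f' * f = 1) :
    LinearMap.trace ℂ Vs f' = (starRingEnd ℂ) (LinearMap.trace ℂ Vs f) := by
  classical
  set N : ℂ → Submodule ℂ Vs := f.maxGenEigenspace with hN
  have hds : DirectSum.IsInternal N :=
    DirectSum.isInternal_submodule_of_iSupIndep_of_iSup_eq_top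
      f.independent_maxGenEigenspace f.iSup_maxGenEigenspace_eq_top
  have hfin : {μ | N μ ≠ ⊥}.Finite :=
    WellFoundedGT.finite_ne_bot_of_iSupIndep f.independent_maxGenEigenspace
  have hcomm : Commute f f' := h1.trans h2.symm
  have hmapsf : ∀ μ, MapsTo f (N μ) (N μ) := fun μ => f.mapsTo_maxGenEigenspace_of_comm rfl μ
  have hmapsf' : ∀ μ, MapsTo f' (N μ) (N μ) := fun μ => f.mapsTo_maxGenEigenspace_of_comm hcomm μ
  -- eigenvalue facts
  have hpow : ∀ μ ∈ hfin.toFinset, μ ^ n = 1 := by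
    intro μ hμ
    rw [Set.Finite.mem_toFinset] at hμ
    have hev : f.HasEigenvalue μ :=
      (Module.End.hasUnifEigenvalue_iff_hasUnifEigenvalue_one (by simp)).mp hμ
    obtain ⟨v, hv⟩ := hev.exists_hasEigenvector
    have := hv.pow_apply n
    rw [hfn] at this
    have h0 : (μ ^ n - 1) • v = 0 := by
      rw [sub_smul, one_smul, ← this]; simp
    rcases smul_eq_zero.mp h0 with h | h
    · exact sub_eq_zero.mp h
    · exact absurd h hv.2
  have htrf : LinearMap.trace ℂ Vs f =
      ∑ μ ∈ hfin.toFinset, μ * (Module.finrank ℂ (N μ) : ℂ) := by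
    rw [LinearMap.trace_eq_sum_trace_restrict' hds hfin hmapsf]
    refine Finset.sum_congr rfl fun μ hμ => ?_
    have hnil : IsNilpotent (f.restrict (hmapsf μ) - algebraMap ℂ _ μ) :=
      f.isNilpotent_restrict_maxGenEigenspace_sub_algebraMap μ
    have := LinearMap.trace_comp_eq_mul_of_commute_of_isNilpotent μ
      (Commute.one_left _) hnil
    rw [Module.End.one_eq_id, LinearMap.id_comp, LinearMap.trace_id] at this
    rw [this]
  have htrf' : LinearMap.trace ℂ Vs f' =
      ∑ μ ∈ hfin.toFinset, μ⁻¹ * (Module.finrank ℂ (N μ) : ℂ) := by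
    rw [LinearMap.trace_eq_sum_trace_restrict' hds hfin hmapsf']
    refine Finset.sum_congr rfl fun μ hμ => ?_
    set r := f.restrict (hmapsf μ) with hr
    set r' := f'.restrict (hmapsf' μ) with hr'
    have hptw : ∀ (a b : Module.End ℂ Vs) (hab : a * b = 1)
        (ha : MapsTo a (N μ) (N μ)) (hb : MapsTo b (N μ) (N μ)),
        (a.restrict ha) * (b.restrict hb) = 1 := by
      intro a b hab ha hb
      ext x
      have h := LinearMap.congr_fun hab (x : Vs)
      simp only [Module.End.mul_apply, Module.End.one_apply] at h ⊢
      change a (b (x : Vs)) = (x : Vs)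
      exact h
    have hrr' : r' * r = 1 := hptw f' f h2 (hmapsf' μ) (hmapsf μ)
    have hrr : r * r' = 1 := hptw f f' h1 (hmapsf μ) (hmapsf' μ)
    have hμ1 : μ ^ n = 1 := hpow μ hμ
    have hμ0 : μ ≠ 0 := by
      intro h; rw [h, zero_pow hn] at hμ1; exact zero_ne_one hμ1
    have hnil : IsNilpotent (r - algebraMap ℂ _ μ) :=
      f.isNilpotent_restrict_maxGenEigenspace_sub_algebraMap μ
    have hcrr : Commute r' r := hrr'.trans hrr.symm
    have hcomr : Commute r' (r - algebraMap ℂ _ μ) :=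
      hcrr.sub_right (Algebra.commute_algebraMap_right μ r')
    have heq : r' - algebraMap ℂ _ μ⁻¹ = (-μ⁻¹) • (r' * (r - algebraMap ℂ _ μ)) := by
      rw [mul_sub, hrr']
      have h3 : r' * algebraMap ℂ (Module.End ℂ (N μ)) μ = μ • r' := by
        rw [Algebra.algebraMap_eq_smul_one, mul_smul_comm, mul_one]
      rw [h3, Algebra.algebraMap_eq_smul_one]
      match_scalars <;> field_simp
    have hnil' : IsNilpotent (r' - algebraMap ℂ _ μ⁻¹) := by
      rw [heq]
      exact (hcomr.isNilpotent_mul_left hnil).smul _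
    have := LinearMap.trace_comp_eq_mul_of_commute_of_isNilpotent μ⁻¹
      (Commute.one_left _) hnil'
    rw [Module.End.one_eq_id, LinearMap.id_comp, LinearMap.trace_id] at this
    rw [this]
  rw [htrf, htrf', map_sum]
  refine Finset.sum_congr rfl fun μ hμ => ?_
  rw [map_mul]
  congr 1
  · exact (RCLike.inv_eq_conj (Complex.norm_eq_one_of_pow_eq_one (hpow μ hμ) hn))
  · simp

lemma charInv {G : Type} [Group G] [Fintype G] (V : FDRep ℂ G) (g : G) :
    V.character g⁻¹ = (starRingEnd ℂ) (V.character g) := by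
  have hn : orderOf g ≠ 0 := (orderOf_pos g).ne'
  refine charInvAux (V.ρ g) (V.ρ g⁻¹) (orderOf g) hn ?_ ?_ ?_
  · rw [← map_pow, pow_orderOf_eq_one, map_one]
  · rw [← map_mul, mul_inv_cancel, map_one]
  · rw [← map_mul, inv_mul_cancel, map_one]

lemma orth {G : Type} [Group G] [Fintype G] (V : FDRep ℂ G) [Simple V] :
    ∑ g : G, V.character g * (starRingEnd ℂ) (V.character g) = (Fintype.card G : ℂ) := by
  have hcard0 : (Fintype.card G : ℂ) ≠ 0 := Nat.cast_ne_zero.mpr Fintype.card_ne_zero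
  letI : Fintype G := (inferInstance : Fintype G)
  letI : Invertible (Fintype.card G : ℂ) := invertibleOfNonzero hcard0
  have h := FDRep.char_orthonormal (k := ℂ) (G := G) V V
  rw [if_pos ⟨Iso.refl V⟩] at h
  have h2 : (∑ g : G, V.character g * V.character g⁻¹) = (Fintype.card G : ℂ) := by
    have h3 := congrArg (fun c => (Fintype.card G : ℂ) * c) h
    simp only [smul_eq_mul, Nat.cast_one, mul_one, ← mul_assoc] at h3
    have h4 : (Fintype.card G : ℂ) * (Nat.card G : ℂ)⁻¹ = 1 := by
      rw [Nat.card_eq_fintype_card]; exact mul_inv_cancel₀ hcard0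
    rw [h4, one_mul] at h3
    exact h3
  rw [← h2]
  exact Finset.sum_congr rfl fun g _ => by rw [charInv]

lemma classCard {G : Type} [Group G] [Fintype G] [DecidableEq G] (y : G) :
    ((Finset.univ.filter (fun x => IsConj x y)).card *
      Nat.card (Subgroup.centralizer ({y} : Set G) : Subgroup G) = Fintype.card G) := by
  classical
  letI : Fintype (MulAction.orbit (ConjAct G) y) := Set.Finite.fintype (Set.toFinite _)
  have horb := MulAction.card_orbit_mul_card_stabilizer_eq_card_group (ConjAct G) y
  have h1 : Fintype.card (MulAction.orbit (ConjAct G) y) =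
      (Finset.univ.filter (fun x => IsConj x y)).card := by
    rw [← Set.toFinset_card]
    congr 1
    ext x
    simp [ConjAct.mem_orbit_conjAct]
  have h2 : Nat.card (Subgroup.centralizer ({y} : Set G) : Subgroup G) =
      Fintype.card (MulAction.stabilizer (ConjAct G) y) := by
    rw [← Nat.card_eq_fintype_card]
    refine Nat.card_congr (Equiv.subtypeEquiv (ConjAct.toConjAct (G:=G)).toEquiv fun x => ?_)
    rw [Subgroup.mem_centralizer_singleton_iff, MulAction.mem_stabilizer_iff]
    show _ ↔ ConjAct.toConjAct x • y = y
    rw [ConjAct.toConjAct_smul]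
    constructor
    · intro h; rw [h, mul_inv_cancel_right]
    · intro h
      conv_rhs => rw [← h]
      group
  rw [h1] at horb
  have hc : Fintype.card (ConjAct G) = Fintype.card G := rfl
  rw [hc] at horb
  rw [← horb]
  exact congrArg (fun m => (Finset.univ.filter (fun x => IsConj x y)).card * m) h2


/-- Let `G` be a finite group, `z` a central element of order 2, and `χ` the character
of an irreducible finite-dimensional complex representation `V` with `χ(z·x) = -χ(x)`.
Let `S ⊆ G` consist of split elements (`x` not conjugate to `z·x`) such that every
split element of `G` is conjugate to exactly one element of `{s, z·s : s ∈ S}`, and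
distinct elements of `S` are neither conjugate nor conjugate after multiplication by
`z`.  Then `Σ_{x ∈ S} |χ(x)|² / |C_G(x)| = 1/2`. -/
theorem spin_character_split_sum (G : Type) [Group G] [Fintype G]
    (z : G) (hzc : z ∈ Subgroup.center G) (hz2 : orderOf z = 2)
    (V : FDRep ℂ G) [Simple V]
    (hspin : ∀ x : G, V.character (z * x) = - V.character x)
    (S : Finset G)
    (hS : ∀ s ∈ S, ¬ IsConj s (z * s))
    (hcover : ∀ x : G, ¬ IsConj x (z * x) →
      ∃! y : G, (y ∈ S ∨ ∃ s ∈ S, y = z * s) ∧ IsConj x y)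
    (hdistinct : ∀ s ∈ S, ∀ t ∈ S, s ≠ t → ¬ IsConj s t ∧ ¬ IsConj s (z * t)) :
    ∑ x ∈ S, V.character x * (starRingEnd ℂ) (V.character x) /
      (Nat.card (Subgroup.centralizer {x} : Subgroup G) : ℂ) = 1 / 2 := by
  classical
  have hzz : z * z = 1 := by
    have h := pow_orderOf_eq_one z
    rwa [hz2, pow_two] at h
  have hzcomm : ∀ g : G, g * z = z * g := fun g => Subgroup.mem_center_iff.mp hzc g
  have hcard0 : (Fintype.card G : ℂ) ≠ 0 := Nat.cast_ne_zero.mpr Fintype.card_ne_zero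
  set χ := V.character with hχdef
  have hconj : ∀ {a b : G}, IsConj a b → χ a = χ b := by
    intro a b hab
    obtain ⟨c, hc⟩ := isConj_iff.mp hab
    rw [← hc]
    exact (FDRep.char_conj V a c).symm
  have hvanish : ∀ x : G, IsConj x (z * x) → χ x = 0 := by
    intro x hx
    have h := hconj hx
    rw [hspin x] at h
    have h2 : (2:ℂ) * χ x = 0 := by rw [two_mul]; nth_rewrite 2 [h]; ring
    exact (mul_eq_zero.mp h2).resolve_left two_ne_zero
  have hzconj : ∀ {a b : G}, IsConj a b → IsConj (z*a) (z*b) := by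
    intro a b hab
    obtain ⟨c, hc⟩ := isConj_iff.mp hab
    refine isConj_iff.mpr ⟨c, ?_⟩
    rw [← hc]
    calc c * (z*a) * c⁻¹ = (c*z) * (a*c⁻¹) := by group
      _ = (z*c) * (a*c⁻¹) := by rw [hzcomm c]
      _ = z * (c*a*c⁻¹) := by group
  have hsplit_of_conj : ∀ {a b : G}, IsConj a b → ¬ IsConj a (z*a) → ¬ IsConj b (z*b) := by
    intro a b hab ha hb
    exact ha (hab.trans (hb.trans (hzconj hab.symm)))
  have hzsplit : ∀ s ∈ S, ¬ IsConj (z*s) (z*(z*s)) := by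
    intro s hs h
    have h2 : z*(z*s) = s := by rw [← mul_assoc, hzz, one_mul]
    rw [h2] at h
    exact hS s hs h.symm
  set T : Finset G := S ∪ S.image (fun s => z * s) with hT
  have hTmem : ∀ y : G, y ∈ T ↔ (y ∈ S ∨ ∃ s ∈ S, y = z * s) := by
    intro y
    simp only [hT, Finset.mem_union, Finset.mem_image]
    constructor
    · rintro (h | ⟨s, hs, rfl⟩)
      · exact Or.inl h
      · exact Or.inr ⟨s, hs, rfl⟩
    · rintro (h | ⟨s, hs, rfl⟩)
      · exact Or.inl h
      · exact Or.inr ⟨s, hs, rfl⟩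
  have hTsplit : ∀ y ∈ T, ¬ IsConj y (z*y) := by
    intro y hy
    rcases (hTmem y).mp hy with h | ⟨s, hs, rfl⟩
    · exact hS y h
    · exact hzsplit s hs
  set F : G → ℂ := fun x => χ x * (starRingEnd ℂ) (χ x) with hF
  set splitF : Finset G := Finset.univ.filter (fun x => ¬ IsConj x (z*x)) with hsplitF
  have hsum1 : ∑ x ∈ splitF, F x = (Fintype.card G : ℂ) := by
    have h := Finset.sum_subset (f := F)
      (Finset.filter_subset (fun x => ¬ IsConj x (z*x)) Finset.univ) ?_
    · rw [h]; exact orth V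
    · intro x _ hx
      have hcx : IsConj x (z*x) := by
        by_contra hc
        exact hx (Finset.mem_filter.mpr ⟨Finset.mem_univ x, hc⟩)
      show χ x * (starRingEnd ℂ) (χ x) = 0
      rw [hvanish x hcx]
      simp
  have hbiU : splitF = T.biUnion (fun y => Finset.univ.filter (fun x => IsConj x y)) := by
    ext x
    simp only [hsplitF, Finset.mem_biUnion, Finset.mem_filter, Finset.mem_univ, true_and]
    constructor
    · intro hx
      obtain ⟨y, ⟨hyT, hxy⟩, -⟩ := hcover x hx
      exact ⟨y, (hTmem y).mpr hyT, hxy⟩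
    · rintro ⟨y, hyT, hxy⟩
      exact hsplit_of_conj hxy.symm (hTsplit y hyT)
  have hpd : Set.PairwiseDisjoint (T : Set G)
      (fun y => Finset.univ.filter (fun x => IsConj x y)) := by
    intro y1 hy1 y2 hy2 hne
    refine Finset.disjoint_left.mpr fun x hx1 hx2 => ?_
    rw [Finset.mem_filter] at hx1 hx2
    have hxsplit : ¬ IsConj x (z*x) :=
      hsplit_of_conj hx1.2.symm (hTsplit y1 hy1)
    obtain ⟨y, hy, huniq⟩ := hcover x hxsplit
    exact hne ((huniq y1 ⟨(hTmem y1).mp hy1, hx1.2⟩).trans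
      (huniq y2 ⟨(hTmem y2).mp hy2, hx2.2⟩).symm)
  set c : G → ℂ := fun y => ((Finset.univ.filter (fun x => IsConj x y)).card : ℂ) with hc
  have hsum2 : ∑ y ∈ T, c y * F y = (Fintype.card G : ℂ) := by
    rw [← hsum1, hbiU, Finset.sum_biUnion hpd]
    refine Finset.sum_congr rfl fun y hy => ?_
    have hcst : ∀ x ∈ Finset.univ.filter (fun x => IsConj x y), F x = F y := by
      intro x hx
      rw [Finset.mem_filter] at hx
      show χ x * (starRingEnd ℂ) (χ x) = χ y * (starRingEnd ℂ) (χ y)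
      rw [hconj hx.2]
    rw [Finset.sum_congr rfl hcst, Finset.sum_const, nsmul_eq_mul]
  have hcent : ∀ s : G, Subgroup.centralizer ({z*s} : Set G)
      = Subgroup.centralizer ({s} : Set G) := by
    intro s
    ext g
    rw [Subgroup.mem_centralizer_singleton_iff, Subgroup.mem_centralizer_singleton_iff]
    constructor
    · intro h
      have h2 : z * (g * s) = z * (s * g) := by
        calc z*(g*s) = (z*g)*s := by group
          _ = (g*z)*s := by rw [hzcomm g]
          _ = g*(z*s) := by group
          _ = (z*s)*g := h
          _ = z*(s*g) := by group
      exact mul_left_cancel h2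
    · intro h
      calc g*(z*s) = (g*z)*s := by group
        _ = (z*g)*s := by rw [hzcomm g]
        _ = z*(g*s) := by group
        _ = z*(s*g) := by rw [h]
        _ = (z*s)*g := by group
  have hFz : ∀ s : G, F (z*s) = F s := by
    intro s
    show χ (z*s) * (starRingEnd ℂ) (χ (z*s)) = χ s * (starRingEnd ℂ) (χ s)
    rw [hspin s, map_neg, neg_mul_neg]
  have hdisjT : Disjoint S (S.image (fun s => z*s)) := by
    rw [Finset.disjoint_right]
    intro a ha haS
    rw [Finset.mem_image] at ha
    obtain ⟨s, hs, rfl⟩ := ha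
    by_cases hst : z*s = s
    · have hz1 : z = 1 := mul_eq_right.mp hst
      rw [hz1, orderOf_one] at hz2
      omega
    · exact (hdistinct (z*s) haS s hs hst).2 (isConj_iff.mpr ⟨1, by group⟩)
  have hinj : Set.InjOn (fun s => z*s) S := fun a _ b _ h => by
    simpa using congrArg (fun w => z * w) h
  have hterm : ∀ s : G, c (z*s) * F (z*s) = c s * F s := by
    intro s
    rw [hFz]
    congr 1
    have h1 := classCard (G := G) (z*s)
    rw [hcent s] at h1
    have h2 := classCard (G := G) s
    have hn0 : 0 < Nat.card (Subgroup.centralizer ({s}:Set G) : Subgroup G) := Nat.card_pos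
    have heq := Nat.eq_of_mul_eq_mul_right hn0 (h1.trans h2.symm)
    show ((Finset.univ.filter (fun x => IsConj x (z*s))).card : ℂ)
      = ((Finset.univ.filter (fun x => IsConj x s)).card : ℂ)
    exact_mod_cast heq
  have hsum3 : (2:ℂ) * ∑ s ∈ S, c s * F s = (Fintype.card G : ℂ) := by
    rw [← hsum2, hT, Finset.sum_union hdisjT, Finset.sum_image hinj]
    rw [Finset.sum_congr rfl (fun s _ => hterm s)]
    ring
  have hcs : ∀ s : G, c s * F s = (Fintype.card G : ℂ) *
      (F s / (Nat.card (Subgroup.centralizer ({s}:Set G) : Subgroup G) : ℂ)) := by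
    intro s
    have h := classCard (G := G) s
    have hn0 : ((Nat.card (Subgroup.centralizer ({s}:Set G) : Subgroup G)) : ℂ) ≠ 0 :=
      Nat.cast_ne_zero.mpr Nat.card_pos.ne'
    have hcast : c s * (Nat.card (Subgroup.centralizer ({s}:Set G) : Subgroup G) : ℂ)
        = (Fintype.card G : ℂ) := by
      show ((Finset.univ.filter (fun x => IsConj x s)).card : ℂ) * _ = _
      exact_mod_cast h
    have hc2 : c s = (Fintype.card G : ℂ) /
        (Nat.card (Subgroup.centralizer ({s}:Set G) : Subgroup G) : ℂ) := by
      rw [eq_div_iff hn0]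
      exact hcast
    rw [hc2]
    ring
  have hgoal : (2:ℂ) * ((Fintype.card G : ℂ) *
      ∑ s ∈ S, F s / (Nat.card (Subgroup.centralizer ({s}:Set G) : Subgroup G) : ℂ))
      = (Fintype.card G : ℂ) := by
    rw [Finset.mul_sum]
    rw [← Finset.sum_congr rfl (fun s _ => hcs s)]
    exact hsum3
  have hX : (2:ℂ) * ∑ s ∈ S, F s /
      (Nat.card (Subgroup.centralizer ({s}:Set G) : Subgroup G) : ℂ) = 1 := by
    apply mul_left_cancel₀ hcard0
    rw [mul_one]
    calc (Fintype.card G : ℂ) * ((2:ℂ) * ∑ s ∈ S, F s / _) 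
        = (2:ℂ) * ((Fintype.card G : ℂ) * ∑ s ∈ S, F s /
          (Nat.card (Subgroup.centralizer ({s}:Set G) : Subgroup G) : ℂ)) := by ring
      _ = (Fintype.card G : ℂ) := hgoal
  have : ∑ s ∈ S, F s /
      (Nat.card (Subgroup.centralizer ({s}:Set G) : Subgroup G) : ℂ) = 1/2 := by
    have h2 : (2:ℂ) ≠ 0 := two_ne_zero
    field_simp at hX ⊢
    linear_combination hX
  exact this
end
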